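/- Let L be a finite-dimensional monolithic Lie algebra with monolith A (unique minimal ideal) such that L/A is solvable and L is not solvable. Then the solvable radical of L does not contain A, the Frattini ideal φ(L) is zero, and there exists a maximal subalgebra M of L with L = M + A. -/

import Mathlib

/-- `M` is a maximal (proper) subalgebra of `L`. -/
def IsMaximalSubalgebra {F : Type*} [Field F] {L : Type*} [LieRing L] [LieAlgebra F L]
    (M : LieSubalgebra F L) : Prop :=
  M ≠ ⊤ ∧ ∀ K : LieSubalgebra F L, M < K → K = ⊤

/-- `C/D` is a chief factor of `L`: `D < C` are ideals of `L` and there is no ideal of `L`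
strictly between them (equivalently, `C/D` is a minimal nonzero ideal of `L/D`). -/
def IsChiefFactor {F : Type*} [Field F] {L : Type*} [LieRing L] [LieAlgebra F L]
    (D C : LieIdeal F L) : Prop :=
  D < C ∧ ∀ K : LieIdeal F L, D ≤ K → K ≤ C → K = D ∨ K = C

/-- The subquotient `S/(S ∩ D)`, as a Lie algebra; when `D ⊆ S` this is `S/D`. -/
abbrev SubQuot {F : Type*} [Field F] {L : Type*} [LieRing L] [LieAlgebra F L]
    (S : LieSubalgebra F L) (D : LieIdeal F L) :=
  S ⧸ LieIdeal.comap S.incl D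

/-- The core `M_L` of a subalgebra `M`: the largest ideal of `L` contained in `M`. -/
def coreOf {F : Type*} [Field F] {L : Type*} [LieRing L] [LieAlgebra F L]
    (M : LieSubalgebra F L) : LieIdeal F L :=
  sSup {I : LieIdeal F L | (I : Set L) ⊆ M}

/-- The Frattini ideal of `L`: the largest ideal of `L` contained in every maximal
subalgebra of `L`. -/
def frattiniIdeal (F : Type*) [Field F] (L : Type*) [LieRing L] [LieAlgebra F L] :
    LieIdeal F L :=
  sSup {I : LieIdeal F L | ∀ M : LieSubalgebra F L, IsMaximalSubalgebra M → (I : Set L) ⊆ M}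

section Aux

variable {F : Type*} [Field F] {L : Type*} [LieRing L] [LieAlgebra F L]

lemma aux_exists_maximal [FiniteDimensional F L] :
    ∀ (n : ℕ) (K : LieSubalgebra F L),
      Module.finrank F L ≤ Module.finrank F K.toSubmodule + n → K ≠ ⊤ →
      ∃ M, IsMaximalSubalgebra M ∧ K ≤ M := by
  intro n
  induction n with
  | zero =>
    intro K hn hK
    exfalso
    apply hK
    have h1 : Module.finrank F K.toSubmodule = Module.finrank F L :=
      le_antisymm (Submodule.finrank_le _) (by simpa using hn)
    have h2 : K.toSubmodule = ⊤ := Submodule.eq_top_of_finrank_eq h1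
    ext x
    simp only [LieSubalgebra.mem_top, iff_true]
    have : x ∈ K.toSubmodule := h2 ▸ Submodule.mem_top
    exact this
  | succ n ih =>
    intro K hn hK
    by_cases h : ∀ K' : LieSubalgebra F L, K < K' → K' = ⊤
    · exact ⟨K, ⟨hK, h⟩, le_rfl⟩
    · push_neg at h
      obtain ⟨K', hlt, hne⟩ := h
      have hsm : K.toSubmodule < K'.toSubmodule := by
        refine lt_of_le_of_ne (fun x hx => hlt.le hx) ?_
        intro hEq
        apply hlt.ne
        ext x
        constructor
        · exact fun hx => hlt.le hx
        · intro hx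
          have : x ∈ K.toSubmodule := hEq ▸ (hx : x ∈ K'.toSubmodule)
          exact this
      have hfr : Module.finrank F K.toSubmodule < Module.finrank F K'.toSubmodule :=
        Submodule.finrank_lt_finrank_of_lt hsm
      obtain ⟨M, hM, hKM⟩ := ih K' (by omega) hne
      exact ⟨M, hM, hlt.le.trans hKM⟩

lemma exists_maximal_above [FiniteDimensional F L] (K : LieSubalgebra F L) (hK : K ≠ ⊤) :
    ∃ M, IsMaximalSubalgebra M ∧ K ≤ M :=
  aux_exists_maximal (Module.finrank F L) K (by omega) hK

lemma frattini_le_maximal {M : LieSubalgebra F L} (hM : IsMaximalSubalgebra M) :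
    (frattiniIdeal F L).toSubmodule ≤ M.toSubmodule := by
  rw [frattiniIdeal, LieSubmodule.sSup_toSubmodule]
  apply sSup_le
  rintro _ ⟨I, hI, rfl⟩
  intro x hx
  exact hI M hM hx

lemma frattini_nongen [FiniteDimensional F L] (K : LieSubalgebra F L)
    (h : K.toSubmodule ⊔ (frattiniIdeal F L).toSubmodule = ⊤) : K = ⊤ := by
  by_contra hK
  obtain ⟨M, hM, hKM⟩ := exists_maximal_above K hK
  have hsub : (⊤ : Submodule F L) ≤ M.toSubmodule := by
    rw [← h]
    exact sup_le (fun x hx => hKM hx) (frattini_le_maximal hM)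
  apply hM.1
  ext x
  simp only [LieSubalgebra.mem_top, iff_true]
  exact hsub Submodule.mem_top

lemma engel_eq_top_of_mem_frattini [FiniteDimensional F L] {x : L}
    (hx : x ∈ frattiniIdeal F L) : LieSubalgebra.engel F x = ⊤ := by
  set f : Module.End F L := LieAlgebra.ad F L x with hf
  obtain ⟨N, hN⟩ := Filter.eventually_atTop.mp f.eventually_codisjoint_ker_pow_range_pow
  have hcod := hN (N + 1) (Nat.le_succ N)
  have hkr : LinearMap.ker (f ^ (N + 1)) ⊔ LinearMap.range (f ^ (N + 1)) = ⊤ :=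
    codisjoint_iff.mp hcod
  have hker : LinearMap.ker (f ^ (N + 1)) ≤ (LieSubalgebra.engel F x).toSubmodule := by
    intro y hy
    rw [LinearMap.mem_ker] at hy
    exact (LieSubalgebra.mem_engel_iff F x y).mpr ⟨N + 1, hy⟩
  have hrange : LinearMap.range (f ^ (N + 1)) ≤ (frattiniIdeal F L).toSubmodule := by
    rintro _ ⟨y, rfl⟩
    have : (f ^ (N + 1)) y = ⁅x, (f ^ N) y⁆ := by
      rw [pow_succ']
      rfl
    rw [this]
    exact lie_mem_left F L (frattiniIdeal F L) x _ hx
  apply frattini_nongen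
  rw [eq_top_iff, ← hkr]
  exact sup_le (hker.trans le_sup_left) (hrange.trans le_sup_right)

lemma frattini_isSolvable [FiniteDimensional F L] :
    LieAlgebra.IsSolvable (frattiniIdeal F L) := by
  have hnil : LieRing.IsNilpotent ((frattiniIdeal F L : LieSubalgebra F L)) := by
    apply LieSubalgebra.isNilpotent_of_forall_le_engel
    intro x hx
    rw [engel_eq_top_of_mem_frattini hx]
    exact le_top
  have : LieAlgebra.IsSolvable ((frattiniIdeal F L : LieSubalgebra F L)) :=
    inferInstance
  exact this

/-- The quotient map as a morphism of Lie algebras. -/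
def lieQuotMk (A : LieIdeal F L) : L →ₗ⁅F⁆ L ⧸ A :=
  { A.toSubmodule.mkQ with
    map_lie' := fun {x y} => (LieSubmodule.Quotient.mk_bracket A x y : _) }

lemma lieQuotMk_surjective (A : LieIdeal F L) : Function.Surjective (lieQuotMk A) :=
  Submodule.Quotient.mk_surjective _

lemma lieQuotMk_ker (A : LieIdeal F L) : (lieQuotMk A).ker = A := by
  ext y
  rw [LieHom.mem_ker]
  exact Submodule.Quotient.mk_eq_zero A.toSubmodule

lemma solvable_of_ideal_and_quot (A : LieIdeal F L)
    (hA : LieAlgebra.IsSolvable A) (hq : LieAlgebra.IsSolvable (L ⧸ A)) :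
    LieAlgebra.IsSolvable L := by
  obtain ⟨k, hk⟩ := LieAlgebra.IsSolvable.solvable F A
  obtain ⟨n, hn⟩ := LieAlgebra.IsSolvable.solvable F (L ⧸ A)
  have hmap := LieIdeal.derivedSeries_map_eq (f := lieQuotMk A) n (lieQuotMk_surjective A)
  have hle : LieAlgebra.derivedSeries F L n ≤ A := by
    rw [← lieQuotMk_ker A, ← LieIdeal.map_eq_bot_iff, hmap, hn]
  rw [LieIdeal.derivedSeries_eq_bot_iff] at hk
  refine LieAlgebra.IsSolvable.mk (R := F) (k := k + n) ?_
  rw [LieAlgebra.derivedSeries_def, LieAlgebra.derivedSeriesOfIdeal_add, ← le_bot_iff, ← hk]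
  exact LieAlgebra.derivedSeriesOfIdeal_mono hle k

end Aux

/-- If `L` is monolithic with monolith `A`, `L/A` is solvable and `L` is not solvable, then
the radical does not contain `A`, the Frattini ideal is zero, and some maximal subalgebra
`M` satisfies `L = M + A`. -/
theorem monolith_not_in_radical_and_phi_eq_bot {F : Type*} [Field F]
    {L : Type*} [LieRing L] [LieAlgebra F L] [FiniteDimensional F L]
    (A : LieIdeal F L) (hA : IsAtom A) (huniq : ∀ B : LieIdeal F L, IsAtom B → B = A)
    (hq : LieAlgebra.IsSolvable (L ⧸ A)) (hns : ¬ LieAlgebra.IsSolvable L) :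
    ¬ A ≤ LieAlgebra.radical F L ∧ frattiniIdeal F L = ⊥ ∧
      ∃ M : LieSubalgebra F L, IsMaximalSubalgebra M ∧
        M.toSubmodule ⊔ A.toSubmodule = ⊤ := by
  -- Part 1
  have hrad : ¬ A ≤ LieAlgebra.radical F L := by
    intro hle
    have hAs : LieAlgebra.IsSolvable A :=
      LieAlgebra.le_solvable_ideal_solvable hle inferInstance
    exact hns (solvable_of_ideal_and_quot A hAs hq)
  -- Part 2
  have hphi : frattiniIdeal F L = ⊥ := by
    by_contra hne
    rcases (eq_bot_or_exists_atom_le (frattiniIdeal F L)) with h | ⟨B, hB, hBle⟩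
    · exact hne h
    · rw [huniq B hB] at hBle
      have hsolv : LieAlgebra.IsSolvable (frattiniIdeal F L) := frattini_isSolvable
      have hfr : frattiniIdeal F L ≤ LieAlgebra.radical F L :=
        (LieAlgebra.LieIdeal.solvable_iff_le_radical F L (frattiniIdeal F L)).mp hsolv
      exact hrad (hBle.trans hfr)
  -- Part 3
  have hAnot : ∃ M : LieSubalgebra F L, IsMaximalSubalgebra M ∧ ¬ (A : Set L) ⊆ M := by
    by_contra hall
    push_neg at hall
    have : A ≤ frattiniIdeal F L := le_sSup (fun M hM => hall M hM)
    rw [hphi] at this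
    exact hA.1 (le_bot_iff.mp this)
  obtain ⟨M, hM, hAM⟩ := hAnot
  -- The submodule sum M + A is a Lie subalgebra since A is an ideal.
  set Ssub : Submodule F L := M.toSubmodule ⊔ A.toSubmodule with hSsub
  have lieS : ∀ {x y : L}, x ∈ Ssub → y ∈ Ssub → ⁅x, y⁆ ∈ Ssub := by
    intro x y hx hy
    obtain ⟨m, hm, a, ha, rfl⟩ := Submodule.mem_sup.mp hx
    obtain ⟨m', hm', a', ha', rfl⟩ := Submodule.mem_sup.mp hy
    have h1 : ⁅m, m'⁆ ∈ Ssub := Submodule.mem_sup_left (M.lie_mem hm hm')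
    have h2 : ⁅m, a'⁆ ∈ Ssub := Submodule.mem_sup_right (lie_mem_right F L A m a' ha')
    have h3 : ⁅a, m' + a'⁆ ∈ Ssub := Submodule.mem_sup_right (lie_mem_left F L A a _ ha)
    have : ⁅m + a, m' + a'⁆ = ⁅m, m'⁆ + ⁅m, a'⁆ + ⁅a, m' + a'⁆ := by
      rw [add_lie, lie_add]
    rw [this]
    exact add_mem (add_mem h1 h2) h3
  set S : LieSubalgebra F L := { Ssub with lie_mem' := fun hx hy => lieS hx hy } with hS
  obtain ⟨a, haA, haM⟩ := Set.not_subset.mp hAM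
  have hMS : M < S := by
    refine lt_of_le_of_ne (fun z hz => Submodule.mem_sup_left hz) ?_
    intro hEq
    apply haM
    have : a ∈ S := Submodule.mem_sup_right haA
    rw [← hEq] at this
    exact this
  have hStop : S = ⊤ := hM.2 S hMS
  refine ⟨hrad, hphi, M, hM, ?_⟩
  have : S.toSubmodule = ⊤ := by
    rw [hStop]
    rfl
  exact this
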